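/- Let (V,E,deg,μ) be a normalized weighted graph (ν = deg). If the multiplicative inequality ‖|∇f|‖²_{ℓ^p(V,deg)} ≤ C_p ‖f‖_{ℓ^p(V,deg)} ‖Δ̃f‖_{ℓ^p(V,deg)} holds for all finitely supported f, then for every vertex x, (deg_x + Σ_{y∼x} μ_{xy}^{p/2} deg_y^{1-p/2})² ≤ C_p' deg_x (deg_x + Σ_{y∼x} μ_{xy}^p deg_y^{1-p}). This follows by testing with the indicator function δ_x. -/

import Mathlib

lemma calc_grad (a d q : ℝ) (ha : 0 ≤ a) (hd : 0 < d) :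
    Real.sqrt (a / (2 * d)) ^ q * d = 2 ^ (-(q / 2)) * (a ^ (q / 2) * d ^ (1 - q / 2)) := by
  have h2d : (0:ℝ) < 2 * d := by linarith
  have had : 0 ≤ a / (2 * d) := div_nonneg ha h2d.le
  rw [Real.sqrt_eq_rpow, ← Real.rpow_mul had]
  have he : 1 / 2 * q = q / 2 := by ring
  rw [he, Real.div_rpow ha h2d.le, Real.mul_rpow (by norm_num : (0:ℝ) ≤ 2) hd.le,
    Real.rpow_neg (by norm_num : (0:ℝ) ≤ 2), Real.rpow_sub hd, Real.rpow_one]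
  have h2q := (Real.rpow_pos_of_pos (by norm_num : (0:ℝ) < 2) (q/2)).ne'
  have hdq := (Real.rpow_pos_of_pos hd (q/2)).ne'
  field_simp

lemma calc_lap (a d q : ℝ) (ha : 0 ≤ a) (hd : 0 < d) :
    (a / d) ^ q * d = a ^ q * d ^ (1 - q) := by
  rw [Real.div_rpow ha hd.le, Real.rpow_sub hd, Real.rpow_one]
  have hdq := (Real.rpow_pos_of_pos hd q).ne'
  field_simp

theorem aux_nec {V : Type*} (μ : V → V → ℝ)
    (hsymm : ∀ x y, μ x y = μ y x) (hnn : ∀ x y, 0 ≤ μ x y)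
    (hloc : ∀ x, (Function.support (μ x)).Finite)
    (D : V → ℝ) (hDdef : ∀ v, D v = ∑' z, μ v z) (hdeg : ∀ v, 0 < D v)
    (p : ℝ) (hp : 1 ≤ p) (Cp : ℝ)
    (hMI : ∀ f : V → ℝ, (Function.support f).Finite →
      ((∑' x, Real.sqrt ((∑' y, μ x y * (f x - f y) ^ 2) / (2 * ∑' y, μ x y)) ^ p
          * ∑' y, μ x y) ^ (1 / p)) ^ 2
        ≤ Cp * (∑' x, |f x| ^ p * ∑' y, μ x y) ^ (1 / p)
            * (∑' x, |(∑' y, μ x y * (f x - f y)) / ∑' y, μ x y| ^ p * ∑' y, μ x y) ^ (1 / p))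
    (x : V) :
    (D x + ∑' y, (μ x y) ^ (p / 2) * (D y) ^ (1 - p / 2)) ^ 2
      ≤ (8 + 2 * (2 * max Cp 1) ^ p) * D x
          * (D x + ∑' y, (μ x y) ^ p * (D y) ^ (1 - p)) := by
  classical
  have hp0 : (0:ℝ) < p := by linarith
  have hpne : p ≠ 0 := hp0.ne'
  have hp2ne : p / 2 ≠ 0 := by positivity
  have hsμ : ∀ v, Summable (μ v) := fun v => summable_of_finite_support (hloc v)
  have hμD : ∀ v y, μ v y ≤ D v := fun v y => by
    rw [hDdef]; exact Summable.le_tsum (hsμ v) y (fun j _ => hnn v j)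
  have hsum : ∀ g : V → ℝ, (∀ v, v ≠ x → μ x v = 0 → g v = 0) → Summable g := by
    intro g hg
    apply summable_of_ne_finset_zero (s := insert x (hloc x).toFinset)
    intro v hv
    simp only [Finset.mem_insert, Set.Finite.mem_toFinset, Function.mem_support, not_or,
      not_not] at hv
    exact hg v hv.1 hv.2
  set f : V → ℝ := fun v => if v = x then (1:ℝ) else 0 with hf
  have hfs : (Function.support f).Finite := by
    apply Set.Finite.subset (Set.finite_singleton x)
    intro v hv
    simp only [Function.mem_support, hf] at hv
    simp only [Set.mem_singleton_iff]
    by_contra hne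
    exact hv (if_neg hne)
  have hA : ∀ v, (∑' y, μ v y * (f v - f y) ^ 2) = if v = x then D x - μ x x else μ x v := by
    intro v
    by_cases hv : v = x
    · subst hv
      have h1 : (fun y => μ v y * (f v - f y) ^ 2) = fun y => if y = v then 0 else μ v y := by
        funext y; by_cases hy : y = v <;> simp [hf, hy]
      rw [h1, if_pos rfl, hDdef]
      have h2 := Summable.tsum_eq_add_tsum_ite (hsμ v) v
      linarith [h2]
    · have h1 : (fun y => μ v y * (f v - f y) ^ 2) = fun y => if y = x then μ v x else 0 := by
        funext y; by_cases hy : y = x <;> simp [hf, hy, hv]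
      rw [h1, tsum_ite_eq, if_neg hv]
      exact hsymm v x
  have hB : ∀ v, (∑' y, μ v y * (f v - f y)) = if v = x then D x - μ x x else -(μ x v) := by
    intro v
    by_cases hv : v = x
    · subst hv
      have h1 : (fun y => μ v y * (f v - f y)) = fun y => if y = v then 0 else μ v y := by
        funext y; by_cases hy : y = v <;> simp [hf, hy]
      rw [h1, if_pos rfl, hDdef]
      have h2 := Summable.tsum_eq_add_tsum_ite (hsμ v) v
      linarith [h2]
    · have h1 : (fun y => μ v y * (f v - f y)) = fun y => if y = x then -(μ v x) else 0 := by
        funext y; by_cases hy : y = x <;> simp [hf, hy, hv]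
      rw [h1, tsum_ite_eq, if_neg hv, hsymm v x]
  have hMterm : ∀ v, |f v| ^ p * D v = if v = x then D x else 0 := by
    intro v
    by_cases hv : v = x
    · subst hv; simp [hf]
    · simp [hf, hv, Real.zero_rpow hpne]
  have key := hMI f hfs
  simp only [hA, hB, ← hDdef] at key
  simp only [hMterm, tsum_ite_eq] at key
  -- abbreviations
  set S : ℝ := ∑' y, (μ x y) ^ (p / 2) * (D y) ^ (1 - p / 2) with hS
  set T : ℝ := ∑' y, (μ x y) ^ p * (D y) ^ (1 - p) with hT
  set S' : ℝ := ∑' v, (if v = x then 0 else (μ x v) ^ (p / 2) * (D v) ^ (1 - p / 2)) with hS'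
  set T' : ℝ := ∑' v, (if v = x then 0 else (μ x v) ^ p * (D v) ^ (1 - p)) with hT'
  have hsS : Summable (fun y => (μ x y) ^ (p / 2) * (D y) ^ (1 - p / 2)) :=
    hsum _ (fun v hv h0 => by simp [h0, Real.zero_rpow hp2ne])
  have hsT : Summable (fun y => (μ x y) ^ p * (D y) ^ (1 - p)) :=
    hsum _ (fun v hv h0 => by simp [h0, Real.zero_rpow hpne])
  have hsS' : Summable (fun v => if v = x then 0 else (μ x v) ^ (p / 2) * (D v) ^ (1 - p / 2)) :=
    hsum _ (fun v hv h0 => by simp [if_neg hv, h0, Real.zero_rpow hp2ne])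
  have hsT' : Summable (fun v => if v = x then 0 else (μ x v) ^ p * (D v) ^ (1 - p)) :=
    hsum _ (fun v hv h0 => by simp [if_neg hv, h0, Real.zero_rpow hpne])
  have hsgL : Summable (fun v =>
      Real.sqrt ((if v = x then D x - μ x x else μ x v) / (2 * D v)) ^ p * D v) :=
    hsum _ (fun v hv h0 => by
      simp [if_neg hv, h0, Real.zero_rpow hpne])
  have hsgN : Summable (fun v =>
      |(if v = x then D x - μ x x else -(μ x v)) / D v| ^ p * D v) :=
    hsum _ (fun v hv h0 => by
      simp [if_neg hv, h0, Real.zero_rpow hpne])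
  have hS'0 : 0 ≤ S' := tsum_nonneg (fun v => by
    by_cases hv : v = x
    · simp [hv]
    · simp only [if_neg hv]
      exact mul_nonneg (Real.rpow_nonneg (hnn x v) _) (Real.rpow_nonneg (hdeg v).le _))
  have hS0 : 0 ≤ S := tsum_nonneg (fun v =>
    mul_nonneg (Real.rpow_nonneg (hnn x v) _) (Real.rpow_nonneg (hdeg v).le _))
  have hT0 : 0 ≤ T := tsum_nonneg (fun v =>
    mul_nonneg (Real.rpow_nonneg (hnn x v) _) (Real.rpow_nonneg (hdeg v).le _))
  have hN0 : 0 ≤ ∑' v, |(if v = x then D x - μ x x else -(μ x v)) / D v| ^ p * D v :=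
    tsum_nonneg (fun v => mul_nonneg (Real.rpow_nonneg (abs_nonneg _) _) (hdeg v).le)
  -- lower bound for the gradient sum
  have hLge : 2 ^ (-(p / 2)) * S' ≤
      ∑' v, Real.sqrt ((if v = x then D x - μ x x else μ x v) / (2 * D v)) ^ p * D v := by
    rw [hS', ← tsum_mul_left]
    refine Summable.tsum_le_tsum (fun v => ?_) (hsS'.mul_left _) hsgL
    by_cases hv : v = x
    · simp only [if_pos hv, mul_zero]
      exact mul_nonneg (Real.rpow_nonneg (Real.sqrt_nonneg _) _) (hdeg v).le
    · simp only [if_neg hv]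
      exact le_of_eq (calc_grad (μ x v) (D v) p (hnn x v) (hdeg v)).symm
  -- upper bound for the laplacian sum
  have hNle : (∑' v, |(if v = x then D x - μ x x else -(μ x v)) / D v| ^ p * D v)
      ≤ D x + T' := by
    have hgsum : Summable (fun v => if v = x then D x else (μ x v) ^ p * (D v) ^ (1 - p)) :=
      hsum _ (fun v hv h0 => by simp [if_neg hv, h0, Real.zero_rpow hpne])
    have step : (∑' v, |(if v = x then D x - μ x x else -(μ x v)) / D v| ^ p * D v)
        ≤ ∑' v, (if v = x then D x else (μ x v) ^ p * (D v) ^ (1 - p)) := by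
      refine Summable.tsum_le_tsum (fun v => ?_) hsgN hgsum
      by_cases hv : v = x
      · subst hv
        simp only [if_pos rfl]
        have h1 : |(D v - μ v v) / D v| ≤ 1 := by
          rw [abs_div, abs_of_nonneg (by linarith [hμD v v] : (0:ℝ) ≤ D v - μ v v),
            abs_of_pos (hdeg v), div_le_one (hdeg v)]
          linarith [hnn v v]
        calc |(D v - μ v v) / D v| ^ p * D v ≤ 1 * D v := by
              exact mul_le_mul_of_nonneg_right
                (Real.rpow_le_one (abs_nonneg _) h1 hp0.le) (hdeg v).le
          _ = D v := one_mul _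
      · simp only [if_neg hv]
        rw [abs_div, abs_neg, abs_of_nonneg (hnn x v), abs_of_pos (hdeg v)]
        exact le_of_eq (calc_lap (μ x v) (D v) p (hnn x v) (hdeg v))
    have split : (∑' v, (if v = x then D x else (μ x v) ^ p * (D v) ^ (1 - p))) = D x + T' := by
      rw [Summable.tsum_eq_add_tsum_ite hgsum x, if_pos rfl, hT']
      congr 1
      exact tsum_congr (fun v => by by_cases hv : v = x <;> simp [hv])
    linarith [step, split]
  -- splitting S and T
  have hSsplit : S = (μ x x) ^ (p / 2) * (D x) ^ (1 - p / 2) + S' := by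
    rw [hS, hS']; exact Summable.tsum_eq_add_tsum_ite hsS x
  have hTsplit : T = (μ x x) ^ p * (D x) ^ (1 - p) + T' := by
    rw [hT, hT']; exact Summable.tsum_eq_add_tsum_ite hsT x
  have hsx_le : (μ x x) ^ (p / 2) * (D x) ^ (1 - p / 2) ≤ D x := by
    have h1 : (μ x x) ^ (p / 2) ≤ (D x) ^ (p / 2) :=
      Real.rpow_le_rpow (hnn x x) (hμD x x) (by positivity)
    have h2 : p / 2 + (1 - p / 2) = 1 := by ring
    calc (μ x x) ^ (p / 2) * (D x) ^ (1 - p / 2)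
        ≤ (D x) ^ (p / 2) * (D x) ^ (1 - p / 2) :=
          mul_le_mul_of_nonneg_right h1 (Real.rpow_nonneg (hdeg x).le _)
      _ = D x := by rw [← Real.rpow_add (hdeg x), h2, Real.rpow_one]
  have hT'le : T' ≤ T := by
    have h0 : 0 ≤ (μ x x) ^ p * (D x) ^ (1 - p) :=
      mul_nonneg (Real.rpow_nonneg (hnn x x) _) (Real.rpow_nonneg (hdeg x).le _)
    linarith [hTsplit]
  -- the key multiplicative bound
  set C : ℝ := max Cp 1 with hC
  have hC1 : (1:ℝ) ≤ C := le_max_right _ _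
  have hC0 : (0:ℝ) < C := by linarith
  have hw0 : 0 ≤ D x * (D x + T) := mul_nonneg (hdeg x).le (by linarith [hdeg x])
  have key2 : ((2 ^ (-(p / 2)) * S') ^ (1 / p)) ^ 2 ≤ C * (D x * (D x + T)) ^ (1 / p) := by
    have hu0 : (0:ℝ) ≤ 2 ^ (-(p / 2)) * S' :=
      mul_nonneg (Real.rpow_nonneg (by norm_num) _) hS'0
    have hL0 : 0 ≤ ∑' v, Real.sqrt ((if v = x then D x - μ x x else μ x v) / (2 * D v)) ^ p * D v :=
      le_trans hu0 hLge
    calc ((2 ^ (-(p / 2)) * S') ^ (1 / p)) ^ 2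
        ≤ ((∑' v, Real.sqrt ((if v = x then D x - μ x x else μ x v) / (2 * D v)) ^ p * D v)
            ^ (1 / p)) ^ 2 := by
          apply pow_le_pow_left₀ (Real.rpow_nonneg hu0 _)
          exact Real.rpow_le_rpow hu0 hLge (by positivity)
      _ ≤ Cp * D x ^ (1 / p)
            * (∑' v, |(if v = x then D x - μ x x else -(μ x v)) / D v| ^ p * D v) ^ (1 / p) := key
      _ ≤ C * D x ^ (1 / p)
            * (∑' v, |(if v = x then D x - μ x x else -(μ x v)) / D v| ^ p * D v) ^ (1 / p) := by
          apply mul_le_mul_of_nonneg_right _ (Real.rpow_nonneg hN0 _)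
          exact mul_le_mul_of_nonneg_right (le_max_left _ _) (Real.rpow_nonneg (hdeg x).le _)
      _ ≤ C * D x ^ (1 / p) * (D x + T) ^ (1 / p) := by
          apply mul_le_mul_of_nonneg_left _
            (mul_nonneg hC0.le (Real.rpow_nonneg (hdeg x).le _))
          exact Real.rpow_le_rpow hN0 (by linarith [hNle, hT'le]) (by positivity)
      _ = C * (D x * (D x + T)) ^ (1 / p) := by
          rw [Real.mul_rpow (hdeg x).le (by linarith [hdeg x] : (0:ℝ) ≤ D x + T), mul_assoc]
  -- raise to the power p
  have hfin : S' ^ 2 ≤ (2 * C) ^ p * (D x * (D x + T)) := by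
    have hu0 : (0:ℝ) ≤ 2 ^ (-(p / 2)) * S' :=
      mul_nonneg (Real.rpow_nonneg (by norm_num) _) hS'0
    have h4 : (((2 ^ (-(p / 2)) * S') ^ (1 / p)) ^ 2) ^ p
        ≤ (C * (D x * (D x + T)) ^ (1 / p)) ^ p :=
      Real.rpow_le_rpow (sq_nonneg _) key2 hp0.le
    have hLHS : (((2 ^ (-(p / 2)) * (S':ℝ)) ^ (1 / p)) ^ 2) ^ p = 2 ^ (-p) * S' ^ 2 := by
      rw [← Real.rpow_natCast ((2 ^ (-(p / 2)) * S') ^ (1 / p)) 2, ← Real.rpow_mul hu0,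
        ← Real.rpow_mul hu0]
      have he : 1 / p * (2:ℕ) * p = 2 := by push_cast; field_simp
      rw [he, Real.rpow_two, mul_pow, ← Real.rpow_natCast (2 ^ (-(p / 2)) : ℝ) 2,
        ← Real.rpow_mul (by norm_num : (0:ℝ) ≤ 2)]
      norm_num
    have hRHS : (C * (D x * (D x + T)) ^ (1 / p)) ^ p = C ^ p * (D x * (D x + T)) := by
      rw [Real.mul_rpow hC0.le (Real.rpow_nonneg hw0 _), ← Real.rpow_mul hw0]
      rw [one_div, inv_mul_cancel₀ hpne, Real.rpow_one]
    rw [hLHS, hRHS] at h4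
    have h2p : (0:ℝ) < 2 ^ p := Real.rpow_pos_of_pos (by norm_num) p
    have hmul : (2:ℝ) ^ p * 2 ^ (-p) = 1 := by
      rw [← Real.rpow_add (by norm_num : (0:ℝ) < 2)]; simp
    have h5 : (2:ℝ) ^ p * (2 ^ (-p) * S' ^ 2) ≤ 2 ^ p * (C ^ p * (D x * (D x + T))) :=
      mul_le_mul_of_nonneg_left h4 h2p.le
    rw [← mul_assoc, hmul, one_mul, ← mul_assoc] at h5
    rwa [Real.mul_rpow (by norm_num : (0:ℝ) ≤ 2) hC0.le]
  -- conclude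
  have hDS : D x + S ≤ 2 * D x + S' := by
    rw [hSsplit]; linarith [hsx_le]
  have hsq : (D x + S) ^ 2 ≤ (2 * D x + S') ^ 2 :=
    pow_le_pow_left₀ (by linarith [hdeg x]) hDS 2
  have hK0 : (0:ℝ) < (2 * C) ^ p := Real.rpow_pos_of_pos (by linarith) p
  nlinarith [hsq, hfin, sq_nonneg (2 * D x - S'), mul_nonneg (hdeg x).le hT0, hdeg x, hK0]


theorem necessary_condition_for_multiplicative_inequality {V : Type*} (μ : V → V → ℝ)
    (hsymm : ∀ x y, μ x y = μ y x) (hnn : ∀ x y, 0 ≤ μ x y)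
    (hloc : ∀ x, (Function.support (μ x)).Finite)
    (hdeg : ∀ x, 0 < ∑' y, μ x y)
    (p : ℝ) (hp : 1 ≤ p) (Cp : ℝ)
    (hMI : ∀ f : V → ℝ, (Function.support f).Finite →
      ((∑' x, Real.sqrt ((∑' y, μ x y * (f x - f y) ^ 2) / (2 * ∑' y, μ x y)) ^ p
          * ∑' y, μ x y) ^ (1 / p)) ^ 2
        ≤ Cp * (∑' x, |f x| ^ p * ∑' y, μ x y) ^ (1 / p)
            * (∑' x, |(∑' y, μ x y * (f x - f y)) / ∑' y, μ x y| ^ p * ∑' y, μ x y) ^ (1 / p)) :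
    ∃ C' : ℝ, 0 < C' ∧ ∀ x : V,
      ((∑' y, μ x y) + ∑' y, (μ x y) ^ (p / 2) * (∑' z, μ y z) ^ (1 - p / 2)) ^ 2
        ≤ C' * (∑' y, μ x y)
            * ((∑' y, μ x y) + ∑' y, (μ x y) ^ p * (∑' z, μ y z) ^ (1 - p)) := by
  refine ⟨8 + 2 * (2 * max Cp 1) ^ p, ?_, fun x => ?_⟩
  · have h1 : (0:ℝ) < 2 * max Cp 1 := by
      have := le_max_right Cp 1; linarith
    have h2 : (0:ℝ) < (2 * max Cp 1) ^ p := Real.rpow_pos_of_pos h1 p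
    linarith
  · exact aux_nec μ hsymm hnn hloc (fun v => ∑' z, μ v z) (fun v => rfl) hdeg p hp Cp hMI x
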